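/- Let f : ℝ → [−1,1] be a Lipschitz continuous function, let d ≥ 1 be an integer and w ≥ 1 a real number, and let f_d be the degree-d Chebyshev projection of f on the window [−w,w]. Then there is an absolute constant C > 0 such that every coefficient of f_d, viewed as a polynomial in x, has magnitude at most C·d·3^d. -/

import Mathlib

open MeasureTheory Polynomial


/-- The `k`-th Chebyshev coefficient of `f` on the window `[-w, w]`:
`a_k := ((1 + 1_{k>0})/π) ∫_{−1}^{1} f(wy) T_k(y)/√(1−y²) dy`. -/
noncomputable def chebCoeff (f : ℝ → ℝ) (w : ℝ) (k : ℕ) : ℝ :=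
  ((if k = 0 then 1 else 2) / Real.pi) *
    ∫ y in (-1 : ℝ)..1, f (w * y) * (Polynomial.Chebyshev.T ℝ k).eval y / Real.sqrt (1 - y ^ 2)

/-- The degree-`d` Chebyshev projection of `f` on the window `[-w, w]`, viewed as a polynomial
in `x`: `f_d(x) := Σ_{k=0}^d a_k T_k(x/w)`. -/
noncomputable def chebProj (f : ℝ → ℝ) (w : ℝ) (d : ℕ) : Polynomial ℝ :=
  ∑ k ∈ Finset.range (d + 1),
    Polynomial.C (chebCoeff f w k) *
      (Polynomial.Chebyshev.T ℝ k).comp (Polynomial.C w⁻¹ * Polynomial.X)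


-- aux: coeff bound for Chebyshev T
lemma chebT_coeff_bound : ∀ k : ℕ, ∀ j : ℕ, |(Polynomial.Chebyshev.T ℝ k).coeff j| ≤ 3 ^ k := by
  intro k
  induction k using Nat.strong_induction_on with
  | _ k ih =>
    match k with
    | 0 => intro j; simp [Polynomial.Chebyshev.T_zero, Polynomial.coeff_one]
           split <;> norm_num
    | 1 => intro j; simp [Polynomial.Chebyshev.T_one, Polynomial.coeff_X]
           split <;> norm_num
    | (k+2) =>
      intro j
      have h2 : ((k+2 : ℕ) : ℤ) = (k : ℤ) + 2 := by push_cast; ring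
      rw [h2, Polynomial.Chebyshev.T_add_two]
      have h1 := ih (k+1) (by omega)
      have h0 := ih k (by omega)
      have hXmul : ∀ j : ℕ, |(Polynomial.X * Polynomial.Chebyshev.T ℝ ((k:ℤ)+1)).coeff j| ≤ 3 ^ (k+1) := by
        intro j
        match j with
        | 0 => simp
        | (j+1) =>
          rw [Polynomial.coeff_X_mul]
          have := h1 j
          rwa [show ((k+1 : ℕ) : ℤ) = (k : ℤ) + 1 by push_cast; ring] at this
      have hcast : ((k : ℕ) : ℤ) = (k : ℤ) := rfl
      have hk0 := h0 j
      rw [hcast] at hk0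
      calc |(2 * Polynomial.X * Polynomial.Chebyshev.T ℝ ((k:ℤ)+1) - Polynomial.Chebyshev.T ℝ (k:ℤ)).coeff j|
          = |2 * (Polynomial.X * Polynomial.Chebyshev.T ℝ ((k:ℤ)+1)).coeff j - (Polynomial.Chebyshev.T ℝ (k:ℤ)).coeff j| := by
            rw [Polynomial.coeff_sub, mul_assoc]
            norm_num [Polynomial.coeff_ofNat_mul]
        _ ≤ 2 * |(Polynomial.X * Polynomial.Chebyshev.T ℝ ((k:ℤ)+1)).coeff j| + |(Polynomial.Chebyshev.T ℝ (k:ℤ)).coeff j| := by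
            calc _ ≤ |2 * (Polynomial.X * Polynomial.Chebyshev.T ℝ ((k:ℤ)+1)).coeff j| + |(Polynomial.Chebyshev.T ℝ (k:ℤ)).coeff j| := abs_sub _ _
            _ = _ := by rw [abs_mul]; norm_num
        _ ≤ 2 * 3 ^ (k+1) + 3 ^ k := by
            have := hXmul j
            nlinarith [abs_nonneg ((Polynomial.X * Polynomial.Chebyshev.T ℝ ((k:ℤ)+1)).coeff j)]
        _ ≤ 3 ^ (k+2) := by ring_nf; nlinarith [pow_pos (by norm_num : (0:ℝ) < 3) k]

-- aux: |T_k(y)| ≤ 1 on [-1,1]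
lemma chebT_eval_bound (k : ℤ) {y : ℝ} (hy : y ∈ Set.Icc (-1:ℝ) 1) :
    |(Polynomial.Chebyshev.T ℝ k).eval y| ≤ 1 := by
  have : y = Real.cos (Real.arccos y) := (Real.cos_arccos hy.1 hy.2).symm
  rw [this, Polynomial.Chebyshev.T_real_cos]
  exact Real.abs_cos_le_one _

-- aux: integrability and value of ∫ 1/√(1-y²)
lemma invsqrt_intervalIntegrable :
    IntervalIntegrable (fun y : ℝ => 1 / Real.sqrt (1 - y ^ 2)) volume (-1) 1 := by
  apply intervalIntegral.intervalIntegrable_deriv_of_nonneg (g := Real.arcsin)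
  · exact Real.continuous_arcsin.continuousOn
  · intro x hx
    rw [min_eq_left (by norm_num : (-1:ℝ) ≤ 1), max_eq_right (by norm_num : (-1:ℝ) ≤ 1)] at hx
    exact Real.hasDerivAt_arcsin hx.1.ne' hx.2.ne
  · intro x hx
    positivity

lemma invsqrt_integral :
    ∫ y in (-1:ℝ)..1, 1 / Real.sqrt (1 - y ^ 2) = Real.pi := by
  rw [intervalIntegral.integral_eq_sub_of_hasDerivAt_of_le (by norm_num)
      Real.continuous_arcsin.continuousOn
      (fun x hx => Real.hasDerivAt_arcsin hx.1.ne' hx.2.ne)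
      invsqrt_intervalIntegrable]
  rw [Real.arcsin_one, Real.arcsin_neg_one]
  ring

-- aux: bound on chebCoeff
lemma chebCoeff_bound (f : ℝ → ℝ) (hf : ∀ x, f x ∈ Set.Icc (-1:ℝ) 1) (w : ℝ) (k : ℕ) :
    |chebCoeff f w k| ≤ 2 := by
  have hI : |∫ y in (-1:ℝ)..1, f (w * y) * (Polynomial.Chebyshev.T ℝ k).eval y / Real.sqrt (1 - y ^ 2)| ≤ Real.pi := by
    have := intervalIntegral.norm_integral_le_abs_of_norm_le (μ := volume) (a := -1) (b := 1)
      (f := fun y => f (w * y) * (Polynomial.Chebyshev.T ℝ k).eval y / Real.sqrt (1 - y ^ 2))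
      (g := fun y => 1 / Real.sqrt (1 - y ^ 2)) ?_ invsqrt_intervalIntegrable
    · rw [invsqrt_integral] at this
      rw [Real.norm_eq_abs, abs_of_pos Real.pi_pos] at this
      exact this
    · rw [Set.uIoc_of_le (by norm_num : (-1:ℝ) ≤ 1)]
      filter_upwards [ae_restrict_mem measurableSet_Ioc] with t ht
      have ht' : t ∈ Set.Icc (-1:ℝ) 1 := ⟨ht.1.le, ht.2⟩
      have hs : 0 ≤ Real.sqrt (1 - t ^ 2) := Real.sqrt_nonneg _
      rw [Real.norm_eq_abs, abs_div, abs_of_nonneg hs]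
      rcases eq_or_lt_of_le hs with h | h
      · rw [← h]; simp
      · rw [div_le_div_iff_of_pos_right h]
        calc |f (w * t) * (Polynomial.Chebyshev.T ℝ k).eval t|
            = |f (w * t)| * |(Polynomial.Chebyshev.T ℝ k).eval t| := abs_mul _ _
          _ ≤ 1 * 1 := by
              apply mul_le_mul _ (chebT_eval_bound _ ht') (abs_nonneg _) zero_le_one
              exact abs_le.2 ⟨(hf (w*t)).1, (hf (w*t)).2⟩
          _ = 1 := by norm_num
  unfold chebCoeff
  rw [abs_mul]
  have hc : |((if k = 0 then 1 else 2 : ℝ)) / Real.pi| ≤ 2 / Real.pi := by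
    rw [abs_div, abs_of_pos Real.pi_pos]
    gcongr
    split <;> norm_num
  calc |(if k = 0 then 1 else 2 : ℝ) / Real.pi| * |_| ≤ (2 / Real.pi) * Real.pi :=
        mul_le_mul hc hI (abs_nonneg _) (by positivity)
    _ = 2 := div_mul_cancel₀ 2 Real.pi_ne_zero

lemma coeff_comp_C_mul_X (p : Polynomial ℝ) (c : ℝ) (j : ℕ) :
    (p.comp (Polynomial.C c * Polynomial.X)).coeff j = p.coeff j * c ^ j := by
  induction p using Polynomial.induction_on' with
  | add p q hp hq => simp [Polynomial.add_comp, Polynomial.coeff_add, hp, hq, add_mul]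
  | monomial n a =>
    rw [Polynomial.monomial_comp, mul_pow, ← Polynomial.C_pow, ← mul_assoc, ← Polynomial.C_mul]
    rw [Polynomial.coeff_C_mul_X_pow, Polynomial.coeff_monomial]
    split <;> rename_i h
    · simp [h]
    · rw [if_neg (fun hh => h hh.symm)]
      simp

theorem chebProj_coeff_bound :
    ∃ C : ℝ, 0 < C ∧
      ∀ (f : ℝ → ℝ), (∃ K : NNReal, LipschitzWith K f) → (∀ x, f x ∈ Set.Icc (-1 : ℝ) 1) →
        ∀ (d : ℕ), 1 ≤ d → ∀ (w : ℝ), 1 ≤ w →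
          ∀ j : ℕ, |(chebProj f w d).coeff j| ≤ C * d * 3 ^ d := by
  refine ⟨4, by norm_num, fun f _ hf1 d hd w hw j => ?_⟩
  have hwi : |w⁻¹ ^ j| ≤ 1 := by
    rw [abs_pow]
    apply pow_le_one₀ (abs_nonneg _)
    rw [abs_inv, abs_of_pos (by linarith : (0:ℝ) < w)]
    exact inv_le_one_of_one_le₀ hw
  have hterm : ∀ k ∈ Finset.range (d+1),
      |chebCoeff f w k * ((Polynomial.Chebyshev.T ℝ k).coeff j * w⁻¹ ^ j)| ≤ 2 * 3 ^ d := by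
    intro k hk
    have hk' : k ≤ d := Nat.lt_succ_iff.mp (Finset.mem_range.mp hk)
    rw [abs_mul, abs_mul]
    calc |chebCoeff f w k| * (|(Polynomial.Chebyshev.T ℝ k).coeff j| * |w⁻¹ ^ j|)
        ≤ 2 * (3 ^ k * 1) := by
          apply mul_le_mul (chebCoeff_bound f hf1 w k) _ (by positivity) (by norm_num)
          exact mul_le_mul (chebT_coeff_bound k j) hwi (abs_nonneg _) (by positivity)
      _ ≤ 2 * 3 ^ d := by
          rw [mul_one]
          have : (3:ℝ) ^ k ≤ 3 ^ d := pow_le_pow_right₀ (by norm_num) hk'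
          linarith
  have hcoeff : (chebProj f w d).coeff j =
      ∑ k ∈ Finset.range (d+1), chebCoeff f w k * ((Polynomial.Chebyshev.T ℝ k).coeff j * w⁻¹ ^ j) := by
    rw [chebProj, Polynomial.finset_sum_coeff]
    congr 1
    funext k
    rw [Polynomial.coeff_C_mul, coeff_comp_C_mul_X]
  rw [hcoeff]
  calc |∑ k ∈ Finset.range (d+1), chebCoeff f w k * ((Polynomial.Chebyshev.T ℝ k).coeff j * w⁻¹ ^ j)|
      ≤ ∑ k ∈ Finset.range (d+1), |chebCoeff f w k * ((Polynomial.Chebyshev.T ℝ k).coeff j * w⁻¹ ^ j)| :=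
        Finset.abs_sum_le_sum_abs _ _
    _ ≤ ∑ _k ∈ Finset.range (d+1), 2 * 3 ^ d := Finset.sum_le_sum hterm
    _ = (d+1) * (2 * 3 ^ d) := by
        rw [Finset.sum_const, Finset.card_range, nsmul_eq_mul]
        push_cast
        ring
    _ ≤ 4 * d * 3 ^ d := by
        have hd' : (1:ℝ) ≤ d := by exact_mod_cast hd
        have h3 : (0:ℝ) < 3 ^ d := by positivity
        nlinarith
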